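/- Let X be a connected partial groupoid with X_1 finite. If X has dimension p(X), then X is a groupoid, i.e., 𝓔_T : X_n → lim_T X is a bijection for every n ≥ 1 and every spine T of [n]. -/

import Mathlib

/-- A symmetric (simplicial) set: a functor `Υᵒᵖ → Set`, where `Υ` has objects
`[n] = {0,…,n}` (encoded as `Fin (n+1)`) and all functions as morphisms.
For `α : [m] → [n]` and `x ∈ X_n`, `act α x` is `x · α ∈ X_m`. -/
structure SymSet where
  obj : ℕ → Type
  act : ∀ {m n : ℕ}, (Fin (m + 1) → Fin (n + 1)) → obj n → obj m
  act_id : ∀ {n : ℕ} (x : obj n), act id x = x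
  act_comp : ∀ {m n k : ℕ} (α : Fin (m + 1) → Fin (n + 1)) (β : Fin (n + 1) → Fin (k + 1))
      (x : obj k), act α (act β x) = act (β ∘ α) x

namespace SymSet

/-- `x_{ij} ∈ X_1`, the action on `x ∈ X_n` of the map `[1] → [n]` with `0 ↦ i`, `1 ↦ j`. -/
def edge (X : SymSet) {n : ℕ} (i j : Fin (n + 1)) (x : X.obj n) : X.obj 1 :=
  X.act (fun t : Fin 2 => if t = 0 then i else j) x

/-- The domain of an edge, its image under `ι₀ : [0] → [1]`, `0 ↦ 0`. -/
def edgeDom (X : SymSet) (f : X.obj 1) : X.obj 0 :=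
  X.act (fun _ : Fin 1 => (0 : Fin 2)) f

/-- The codomain of an edge, its image under `ι₁ : [0] → [1]`, `0 ↦ 1`. -/
def edgeCod (X : SymSet) (f : X.obj 1) : X.obj 0 :=
  X.act (fun _ : Fin 1 => (1 : Fin 2)) f

/-- The identity edge `id_a` on an object `a ∈ X_0`, induced by the unique map `[1] → [0]`. -/
def identityEdge (X : SymSet) (a : X.obj 0) : X.obj 1 :=
  X.act (fun _ : Fin 2 => (0 : Fin 1)) a

/-- An edge is an identity if it is in the image of `X_0 → X_1`. -/
def IsIdentityEdge (X : SymSet) (f : X.obj 1) : Prop :=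
  ∃ a : X.obj 0, f = X.identityEdge a

/-- The tuple of edges `x_{ij}` (for `i < j` an edge `{i,j}` of the spine `T`)
associated to an `n`-simplex `x`. -/
def spineTuple (X : SymSet) {n : ℕ} (T : SimpleGraph (Fin (n + 1))) (x : X.obj n) :
    ∀ i j : Fin (n + 1), i < j → T.Adj i j → X.obj 1 :=
  fun i j _ _ => X.edge i j x

/-- Membership in `lim_T X`: the components have matching endpoints. -/
def IsSpineLim (X : SymSet) {n : ℕ} (T : SimpleGraph (Fin (n + 1)))
    (e : ∀ i j : Fin (n + 1), i < j → T.Adj i j → X.obj 1) : Prop :=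
  ∃ v : Fin (n + 1) → X.obj 0, ∀ (i j : Fin (n + 1)) (hlt : i < j) (h : T.Adj i j),
    X.edgeDom (e i j hlt h) = v i ∧ X.edgeCod (e i j hlt h) = v j

/-- The limit `lim_T X` of the diagram associated to a spine `T`. -/
def SpineLim (X : SymSet) {n : ℕ} (T : SimpleGraph (Fin (n + 1))) : Type :=
  { e : ∀ i j : Fin (n + 1), i < j → T.Adj i j → X.obj 1 // X.IsSpineLim T e }

lemma spineTuple_isSpineLim (X : SymSet) {n : ℕ} (T : SimpleGraph (Fin (n + 1)))
    (x : X.obj n) : X.IsSpineLim T (X.spineTuple T x) := by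
  refine ⟨fun i => X.act (fun _ : Fin 1 => i) x, fun i j hlt h => ⟨?_, ?_⟩⟩
  · show X.act _ (X.act _ x) = _
    rw [X.act_comp]
    show X.act ((fun t : Fin 2 => if t = 0 then i else j) ∘ fun _ : Fin 1 => 0) x
      = X.act (fun _ : Fin 1 => i) x
    congr 1
  · show X.act _ (X.act _ x) = _
    rw [X.act_comp]
    show X.act ((fun t : Fin 2 => if t = 0 then i else j) ∘ fun _ : Fin 1 => 1) x
      = X.act (fun _ : Fin 1 => j) x
    congr 1

/-- The map `𝓔_T : X_n → lim_T X`. -/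
def spineMap (X : SymSet) {n : ℕ} (T : SimpleGraph (Fin (n + 1))) (x : X.obj n) :
    X.SpineLim T :=
  ⟨X.spineTuple T x, X.spineTuple_isSpineLim T x⟩

/-- A symmetric set is *spiny* if `𝓔_T` is injective for every `n ≥ 1` and
every spine `T` of `[n]` (a tree with vertex set `[n]`). -/
def Spiny (X : SymSet) : Prop :=
  ∀ n : ℕ, 1 ≤ n → ∀ T : SimpleGraph (Fin (n + 1)), T.IsTree →
    Function.Injective (X.spineMap T)

/-- An element `x ∈ X_n` is degenerate if `x = y · σ` for some noninvertible
surjection `σ : [n] → [k]`. -/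
def Degenerate (X : SymSet) {n : ℕ} (x : X.obj n) : Prop :=
  ∃ (k : ℕ) (σ : Fin (n + 1) → Fin (k + 1)) (y : X.obj k),
    Function.Surjective σ ∧ ¬ Function.Bijective σ ∧ x = X.act σ y

/-- A symmetric subset (subfunctor) of `X`. -/
structure SymSubset (X : SymSet) where
  carrier : ∀ n : ℕ, Set (X.obj n)
  act_mem : ∀ {m n : ℕ} (α : Fin (m + 1) → Fin (n + 1)) {x : X.obj n},
    x ∈ carrier n → X.act α x ∈ carrier m

/-- `X` is `n`-skeletal: the smallest symmetric subset of `X` containing all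
of its `n`-simplices is all of `X`. -/
def IsSkeletal (X : SymSet) (n : ℕ) : Prop :=
  ∀ Y : SymSubset X, (∀ x : X.obj n, x ∈ Y.carrier n) →
    ∀ (m : ℕ) (x : X.obj m), x ∈ Y.carrier m

/-- `X` has dimension `n`: it is `n`-skeletal but not `k`-skeletal for `k < n`
(for `n ≥ 1` this is equivalent to not being `(n-1)`-skeletal). -/
def HasDim (X : SymSet) (n : ℕ) : Prop :=
  X.IsSkeletal n ∧ ∀ k : ℕ, k < n → ¬ X.IsSkeletal k

/-- Two objects are related if there is an edge between them (in either direction). -/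
def EdgeRel (X : SymSet) (a b : X.obj 0) : Prop :=
  ∃ f : X.obj 1, (X.edgeDom f = a ∧ X.edgeCod f = b) ∨ (X.edgeDom f = b ∧ X.edgeCod f = a)

/-- `X` is connected: it is nonempty and any two objects are joined by a
zig-zag of edges. -/
def Connected (X : SymSet) : Prop :=
  Nonempty (X.obj 0) ∧ ∀ a b : X.obj 0, Relation.ReflTransGen X.EdgeRel a b

/-- `n_a`: the number of nonidentity edges with domain `a`. -/
noncomputable def nEdges (X : SymSet) (a : X.obj 0) : ℕ :=
  Nat.card { f : X.obj 1 // X.edgeDom f = a ∧ ¬ X.IsIdentityEdge f }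

/-- `p(X)`: the maximum of the `n_a` over all objects `a`. -/
noncomputable def pVal (X : SymSet) : ℕ := ⨆ a : X.obj 0, X.nEdges a

/-- A map of symmetric sets (a natural transformation). -/
structure SymMap (X Y : SymSet) where
  app : ∀ n : ℕ, X.obj n → Y.obj n
  naturality : ∀ {m n : ℕ} (α : Fin (m + 1) → Fin (n + 1)) (x : X.obj n),
    app m (X.act α x) = Y.act α (app n x)

/-- A map of symmetric sets is an isomorphism iff it is levelwise bijective. -/
def SymMap.IsIso {X Y : SymSet} (F : SymMap X Y) : Prop :=
  ∀ n : ℕ, Function.Bijective (F.app n)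

/-- `X` and `Y` are isomorphic symmetric sets. -/
def Isomorphic (X Y : SymSet) : Prop := ∃ F : SymMap X Y, F.IsIso

/-- The Bousfield–Segal map `𝓑_m : X_m → X_1^m`, `x ↦ (x_{01}, x_{02}, …, x_{0m})`. -/
def bousfield (X : SymSet) {m : ℕ} (x : X.obj m) : Fin m → X.obj 1 :=
  fun i => X.edge 0 i.succ x

/-- `X` is spiny in degrees below `q`: `𝓔_T` is injective for every spine `T`
of `[n]` for each `1 ≤ n ≤ q`. -/
def SpinyBelow (X : SymSet) (q : ℕ) : Prop :=
  ∀ n : ℕ, 1 ≤ n → n ≤ q → ∀ T : SimpleGraph (Fin (n + 1)), T.IsTree →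
    Function.Injective (X.spineMap T)

/-- `X` is a groupoid: `𝓔_T : X_n → lim_T X` is a bijection for every `n ≥ 1`
and every spine `T` of `[n]`. -/
def IsGroupoid (X : SymSet) : Prop :=
  ∀ n : ℕ, 1 ≤ n → ∀ T : SimpleGraph (Fin (n + 1)), T.IsTree →
    Function.Bijective (X.spineMap T)

/-- `X` is reduced: `X_0` is a singleton. -/
def Reduced (X : SymSet) : Prop := Nonempty (X.obj 0) ∧ Subsingleton (X.obj 0)

/-- A partial group is a reduced spiny symmetric set. -/
def IsPartialGroup (X : SymSet) : Prop := X.Reduced ∧ X.Spiny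

/-- The levelwise product of two symmetric sets. -/
def prod (X Y : SymSet) : SymSet where
  obj n := X.obj n × Y.obj n
  act α p := (X.act α p.1, Y.act α p.2)
  act_id p := by cases p with | mk a b => simp only [X.act_id, Y.act_id]
  act_comp α β p := by cases p with | mk a b => simp only [X.act_comp, Y.act_comp]

end SymSet
namespace SymSet

variable (X : SymSet)

/-- The `i`-th vertex of a simplex. -/
def vert {n : ℕ} (i : Fin (n + 1)) (x : X.obj n) : X.obj 0 :=
  X.act (fun _ : Fin 1 => i) x

/-- The reversal of an edge. -/
def rev (f : X.obj 1) : X.obj 1 :=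
  X.act (fun t : Fin 2 => if t = 0 then 1 else 0) f

variable {X}

lemma edge_act {m n : ℕ} (α : Fin (m + 1) → Fin (n + 1)) (i j : Fin (m + 1)) (x : X.obj n) :
    X.edge i j (X.act α x) = X.edge (α i) (α j) x := by
  unfold edge
  rw [X.act_comp]
  congr 1
  funext t
  simp only [Function.comp_apply]
  by_cases h : t = 0 <;> simp [h]

lemma vert_act {m n : ℕ} (α : Fin (m + 1) → Fin (n + 1)) (i : Fin (m + 1)) (x : X.obj n) :
    X.vert i (X.act α x) = X.vert (α i) x := by
  unfold vert
  rw [X.act_comp]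
  congr 1

lemma edgeDom_edge {n : ℕ} (i j : Fin (n + 1)) (x : X.obj n) :
    X.edgeDom (X.edge i j x) = X.vert i x := by
  unfold edgeDom edge vert
  rw [X.act_comp]
  have : ((fun t : Fin 2 => if t = 0 then i else j) ∘ fun _ : Fin 1 => (0 : Fin 2))
      = fun _ : Fin 1 => i := by funext t; simp [Function.comp]
  rw [this]

lemma edgeCod_edge {n : ℕ} (i j : Fin (n + 1)) (x : X.obj n) :
    X.edgeCod (X.edge i j x) = X.vert j x := by
  unfold edgeCod edge vert
  rw [X.act_comp]
  congr 1

lemma edge_self {n : ℕ} (i : Fin (n + 1)) (x : X.obj n) :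
    X.edge i i x = X.identityEdge (X.vert i x) := by
  unfold edge identityEdge vert
  rw [X.act_comp]
  congr 1
  funext t
  simp

lemma edgeDom_identityEdge (a : X.obj 0) : X.edgeDom (X.identityEdge a) = a := by
  unfold edgeDom identityEdge
  rw [X.act_comp]
  have : ((fun _ : Fin 2 => (0 : Fin 1)) ∘ fun _ : Fin 1 => (0 : Fin 2)) = id := by
    funext t; exact Subsingleton.elim _ _
  rw [this, X.act_id]

lemma edgeCod_identityEdge (a : X.obj 0) : X.edgeCod (X.identityEdge a) = a := by
  unfold edgeCod identityEdge
  rw [X.act_comp]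
  have : ((fun _ : Fin 2 => (0 : Fin 1)) ∘ fun _ : Fin 1 => (1 : Fin 2)) = id := by
    funext t; exact Subsingleton.elim _ _
  rw [this, X.act_id]

lemma rev_edge {n : ℕ} (i j : Fin (n + 1)) (x : X.obj n) :
    X.rev (X.edge i j x) = X.edge j i x := by
  unfold rev edge
  rw [X.act_comp]
  congr 1
  funext t
  fin_cases t <;> simp

lemma rev_rev (f : X.obj 1) : X.rev (X.rev f) = f := by
  unfold rev
  rw [X.act_comp]
  have : ((fun t : Fin 2 => if t = 0 then 1 else 0) ∘ fun t : Fin 2 => if t = 0 then 1 else 0)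
      = id := by funext t; fin_cases t <;> simp
  rw [this, X.act_id]

lemma edgeDom_rev (f : X.obj 1) : X.edgeDom (X.rev f) = X.edgeCod f := by
  unfold edgeDom rev edgeCod
  rw [X.act_comp]
  congr 1

lemma edgeCod_rev (f : X.obj 1) : X.edgeCod (X.rev f) = X.edgeDom f := by
  unfold edgeCod rev edgeDom
  rw [X.act_comp]
  congr 1

lemma rev_identityEdge (a : X.obj 0) : X.rev (X.identityEdge a) = X.identityEdge a := by
  unfold rev identityEdge
  rw [X.act_comp]
  congr 1

lemma identityEdge_injective : Function.Injective X.identityEdge := by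
  intro a b h
  have := congrArg X.edgeDom h
  rwa [edgeDom_identityEdge, edgeDom_identityEdge] at this

lemma IsIdentityEdge.eq_identityEdge {f : X.obj 1} (h : X.IsIdentityEdge f) :
    f = X.identityEdge (X.edgeDom f) := by
  obtain ⟨a, rfl⟩ := h
  rw [edgeDom_identityEdge]

lemma isIdentityEdge_rev {f : X.obj 1} (h : X.IsIdentityEdge (X.rev f)) :
    X.IsIdentityEdge f := by
  obtain ⟨a, ha⟩ := h
  refine ⟨a, ?_⟩
  rw [← rev_rev (X := X) f, ha, rev_identityEdge]

end SymSet
namespace SymSet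

lemma not_reachable_of_isolated {V : Type*} {G : SimpleGraph V} {v w : V}
    (h : ∀ x, ¬ G.Adj v x) (hvw : v ≠ w) : ¬ G.Reachable v w := by
  rintro ⟨p⟩
  cases p with
  | nil => exact hvw rfl
  | cons h' _ => exact h _ h'

/-- The star graph on `Fin (n+1)` centered at `c`. -/
def starGraph {n : ℕ} (c : Fin (n + 1)) : SimpleGraph (Fin (n + 1)) where
  Adj i j := i ≠ j ∧ (i = c ∨ j = c)
  symm := ⟨by intro i j ⟨h1, h2⟩; exact ⟨h1.symm, h2.symm⟩⟩
  loopless := ⟨fun i h => h.1 rfl⟩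

lemma starGraph_adj {n : ℕ} {c i j : Fin (n + 1)} :
    (starGraph c).Adj i j ↔ i ≠ j ∧ (i = c ∨ j = c) := Iff.rfl

lemma starGraph_connected {n : ℕ} (c : Fin (n + 1)) : (starGraph c).Connected := by
  rw [SimpleGraph.connected_iff]
  refine ⟨fun i j => ?_, ⟨c⟩⟩
  have key : ∀ k : Fin (n + 1), (starGraph c).Reachable k c := by
    intro k
    by_cases hk : k = c
    · exact hk ▸ SimpleGraph.Reachable.refl k
    · exact SimpleGraph.Adj.reachable ⟨hk, Or.inr rfl⟩
  exact (key i).trans (key j).symm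

/-- In the star graph with the edge `{d, c}` removed, the vertex `d ≠ c` is isolated. -/
lemma starGraph_isolated {n : ℕ} {c d : Fin (n + 1)} (hd : d ≠ c) (x : Fin (n + 1)) :
    ¬ ((starGraph c) \ SimpleGraph.fromEdgeSet {s(d, c)}).Adj d x := by
  intro hx
  rw [SimpleGraph.sdiff_adj] at hx
  obtain ⟨⟨hdx, hdc⟩, hnot⟩ := hx
  have hxc : x = c := by tauto
  subst hxc
  exact hnot (by rw [SimpleGraph.fromEdgeSet_adj]; exact ⟨rfl, hdx⟩)

lemma starGraph_isTree {n : ℕ} (c : Fin (n + 1)) : (starGraph c).IsTree := by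
  refine ⟨starGraph_connected c, ?_⟩
  rw [SimpleGraph.isAcyclic_iff_forall_adj_isBridge]
  intro i j hadj
  rw [SimpleGraph.isBridge_iff]
  obtain ⟨hne, hc⟩ := hadj
  rcases hc with rfl | rfl
  · -- i = c, delete s(c, j); j is isolated
    have hj : j ≠ i := fun h => hne h.symm
    intro r
    have : s(i, j) = s(j, i) := Sym2.eq_swap
    rw [this] at r
    exact not_reachable_of_isolated (starGraph_isolated hj) hj r.symm
  · -- j = c, delete s(i, c); i is isolated
    exact not_reachable_of_isolated (starGraph_isolated hne) hne
end SymSet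
namespace SymSet

/-- A spiny symmetric set: a simplex is determined by its star of edges at any vertex. -/
lemma star_determines {X : SymSet} (hX : X.Spiny) {n : ℕ} (hn : 1 ≤ n) (c : Fin (n + 1))
    {x y : X.obj n} (h : ∀ j, j ≠ c → X.edge c j x = X.edge c j y) : x = y := by
  apply hX n hn (starGraph c) (starGraph_isTree c)
  apply Subtype.ext
  funext i j hlt hadj
  show X.edge i j x = X.edge i j y
  obtain ⟨hne, hc⟩ := hadj
  rcases hc with rfl | rfl
  · exact h j (fun hj => hne hj.symm)
  · calc X.edge i j x = X.rev (X.edge j i x) := (rev_edge j i x).symm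
      _ = X.rev (X.edge j i y) := by rw [h i hne]
      _ = X.edge i j y := rev_edge j i y

/-- `z` does not factor through a lower-dimensional simplex. -/
def NonDeg (X : SymSet) {n : ℕ} (z : X.obj (n + 1)) : Prop :=
  ∀ (α : Fin (n + 2) → Fin (n + 1)) (y : X.obj n), z ≠ X.act α y

lemma factors_of_missing {X : SymSet} {n : ℕ} (σ : Fin (n + 2) → Fin (n + 2)) (t : Fin (n + 2))
    (hmiss : ∀ k, σ k ≠ t) (z : X.obj (n + 1)) :
    ∃ (α : Fin (n + 2) → Fin (n + 1)) (y : X.obj n), X.act σ z = X.act α y := by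
  choose ρ hρ using fun k => Fin.exists_succAbove_eq (hmiss k)
  refine ⟨ρ, X.act t.succAbove z, ?_⟩
  rw [X.act_comp]
  congr 1
  funext k
  exact (hρ k).symm

lemma nonDeg_ne_act_missing {X : SymSet} (hX : X.Spiny) {n : ℕ} {z : X.obj (n + 1)}
    (hz : X.NonDeg z) (σ : Fin (n + 2) → Fin (n + 2)) (t : Fin (n + 2))
    (hmiss : ∀ k, σ k ≠ t) : z ≠ X.act σ z := by
  intro h
  obtain ⟨α, y, hy⟩ := factors_of_missing σ t hmiss z
  exact hz α y (h.trans hy)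

/-- The star of a nondegenerate simplex consists of pairwise distinct edges. -/
lemma nonDeg_star_injective {X : SymSet} (hX : X.Spiny) {q : ℕ} {z : X.obj (q + 1)}
    (hz : X.NonDeg z) : Function.Injective (fun j : Fin (q + 2) => X.edge 0 j z) := by
  have key : ∀ i j : Fin (q + 2), j ≠ 0 → i ≠ j → X.edge 0 i z = X.edge 0 j z → False := by
    intro i j hj hne hij
    set σ : Fin (q + 2) → Fin (q + 2) := fun k => if k = j then i else k with hσ
    have hmiss : ∀ k, σ k ≠ j := by
      intro k
      by_cases hk : k = j <;> simp [hσ, hk]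
      exact hne
    apply nonDeg_ne_act_missing hX hz σ j hmiss
    apply star_determines hX (Nat.le_add_left 1 q) 0
    intro m _
    rw [edge_act]
    have h0 : σ 0 = 0 := by simp [hσ, Ne.symm hj]
    rw [h0]
    by_cases hm : m = j
    · subst hm; simp only [hσ, if_pos rfl]; exact hij.symm
    · simp [hσ, hm]
  intro i j hij
  simp only at hij
  by_contra hne
  by_cases hj : j = 0
  · subst hj
    exact key 0 i hne (fun h => hne h.symm) hij.symm
  · exact key i j hj hne hij

/-- The star edges of a nondegenerate simplex are not identities. -/
lemma nonDeg_star_not_identity {X : SymSet} (hX : X.Spiny) {q : ℕ} {z : X.obj (q + 1)}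
    (hz : X.NonDeg z) {j : Fin (q + 2)} (hj : j ≠ 0) :
    ¬ X.IsIdentityEdge (X.edge 0 j z) := by
  intro hid
  have hdom : X.edgeDom (X.edge 0 j z) = X.vert 0 z := edgeDom_edge 0 j z
  have : X.edge 0 j z = X.identityEdge (X.vert 0 z) := by
    rw [hid.eq_identityEdge, hdom]
  rw [← edge_self 0 z] at this
  exact hj (nonDeg_star_injective hX hz this)

end SymSet
namespace SymSet

/-- The symmetric subset generated by the `k`-simplices. -/
def genSub (X : SymSet) (k : ℕ) : SymSubset X where
  carrier m := {x | ∃ (α : Fin (m + 1) → Fin (k + 1)) (y : X.obj k), x = X.act α y}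
  act_mem := by
    rintro m n α x ⟨β, y, rfl⟩
    exact ⟨β ∘ α, y, X.act_comp α β y⟩

lemma exists_nonDeg (X : SymSet) {q : ℕ} (h1 : X.IsSkeletal (q + 1)) (h2 : ¬ X.IsSkeletal q) :
    ∃ z : X.obj (q + 1), X.NonDeg z := by
  have hbad : ∃ (m : ℕ) (x : X.obj m), x ∉ (X.genSub q).carrier m := by
    by_contra hall
    push_neg at hall
    apply h2
    intro Y hY m x
    obtain ⟨α, y, rfl⟩ := hall m x
    exact Y.act_mem α (hY y)
  obtain ⟨m, x, hx⟩ := hbad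
  obtain ⟨α, z, rfl⟩ :=
    h1 (X.genSub (q + 1)) (fun y => ⟨id, y, (X.act_id y).symm⟩) m x
  refine ⟨z, fun β y hzy => hx ?_⟩
  exact ⟨β ∘ α, y, by rw [hzy, X.act_comp]⟩

/-- There is a nondegenerate `(q+1)`-simplex based at `a`. -/
def FullAt (X : SymSet) (q : ℕ) (a : X.obj 0) : Prop :=
  ∃ z : X.obj (q + 1), X.NonDeg z ∧ X.vert 0 z = a

lemma nonDeg_act_equiv {X : SymSet} {q : ℕ} {z : X.obj (q + 1)} (hz : X.NonDeg z)
    (π : Equiv.Perm (Fin (q + 2))) : X.NonDeg (X.act ⇑π z) := by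
  intro α y h
  apply hz (α ∘ ⇑π.symm) y
  have : z = X.act ⇑π.symm (X.act ⇑π z) := by
    rw [X.act_comp]
    have : (⇑π ∘ ⇑π.symm) = id := by funext k; simp
    rw [this, X.act_id]
  rw [this, h, X.act_comp]

lemma fullAt_covers {X : SymSet} (hX : X.Spiny) (hfin : Finite (X.obj 1)) {q : ℕ}
    (hp : X.pVal = q + 1) {a : X.obj 0} {z : X.obj (q + 1)} (hz : X.NonDeg z)
    (hza : X.vert 0 z = a) :
    ∀ f : X.obj 1, X.edgeDom f = a → ¬ X.IsIdentityEdge f →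
      ∃ j : Fin (q + 2), j ≠ 0 ∧ X.edge 0 j z = f := by
  haveI := hfin
  haveI hSfin : Finite {f : X.obj 1 // X.edgeDom f = a ∧ ¬ X.IsIdentityEdge f} :=
    Subtype.finite
  set φ : Fin (q + 1) → {f : X.obj 1 // X.edgeDom f = a ∧ ¬ X.IsIdentityEdge f} :=
    fun i => ⟨X.edge 0 i.succ z, by rw [edgeDom_edge, hza],
      nonDeg_star_not_identity hX hz (Fin.succ_ne_zero i)⟩ with hφdef
  have hφ : Function.Injective φ := by
    intro i j hij
    have h2 := congrArg Subtype.val hij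
    exact Fin.succ_injective _ (nonDeg_star_injective hX hz h2)
  have hcard : Nat.card {f : X.obj 1 // X.edgeDom f = a ∧ ¬ X.IsIdentityEdge f} ≤ q + 1 := by
    have h1 : X.nEdges a ≤ X.pVal := by
      haveI : Finite (X.obj 0) := Finite.of_injective X.identityEdge identityEdge_injective
      exact le_ciSup ((Set.finite_range X.nEdges).bddAbove) a
    rw [hp] at h1
    exact h1
  have hbij : Function.Bijective φ :=
    Function.Injective.bijective_of_nat_card_le hφ
      (by
        have hqf : Nat.card (Fin (q + 1)) = q + 1 := Nat.card_eq_of_equiv_fin (Equiv.refl _)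
        rw [hqf]; exact hcard)
  intro f hfa hfid
  obtain ⟨i, hi⟩ := hbij.2 ⟨f, hfa, hfid⟩
  exact ⟨i.succ, Fin.succ_ne_zero i, congrArg Subtype.val hi⟩

lemma cod_edge_eq {X : SymSet} {n : ℕ} (i j : Fin (n + 1)) (x : X.obj n) :
    X.edgeCod (X.edge i j x) = X.vert j x := edgeCod_edge i j x

lemma fullAt_step {X : SymSet} (hX : X.Spiny) (hfin : Finite (X.obj 1)) {q : ℕ}
    (hp : X.pVal = q + 1) {a b : X.obj 0} (hf : ∃ f, X.edgeDom f = a ∧ X.edgeCod f = b)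
    (ha : X.FullAt q a) : X.FullAt q b := by
  obtain ⟨z, hz, hza⟩ := ha
  obtain ⟨f, hfa, hfb⟩ := hf
  by_cases hid : X.IsIdentityEdge f
  · have : f = X.identityEdge a := by rw [hid.eq_identityEdge, hfa]
    have hba : b = a := by rw [← hfb, this, edgeCod_identityEdge]
    exact hba ▸ ⟨z, hz, hza⟩
  · obtain ⟨j, hj0, hjz⟩ := fullAt_covers hX hfin hp hz hza f hfa hid
    have hbj : X.vert j z = b := by rw [← hfb, ← hjz, edgeCod_edge]
    set π : Equiv.Perm (Fin (q + 2)) := Equiv.swap 0 j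
    refine ⟨X.act ⇑π z, nonDeg_act_equiv hz π, ?_⟩
    rw [vert_act]
    have : π 0 = j := Equiv.swap_apply_left 0 j
    rw [this, hbj]

lemma fullAt_of_edgeRel {X : SymSet} (hX : X.Spiny) (hfin : Finite (X.obj 1)) {q : ℕ}
    (hp : X.pVal = q + 1) {a b : X.obj 0} (hab : X.EdgeRel a b)
    (ha : X.FullAt q a) : X.FullAt q b := by
  obtain ⟨f, hf | hf⟩ := hab
  · exact fullAt_step hX hfin hp ⟨f, hf⟩ ha
  · refine fullAt_step hX hfin hp ⟨X.rev f, ?_, ?_⟩ ha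
    · rw [edgeDom_rev, hf.2]
    · rw [edgeCod_rev, hf.1]

lemma fullAt_all {X : SymSet} (hX : X.Spiny) (hconn : X.Connected)
    (hfin : Finite (X.obj 1)) {q : ℕ} (hp : X.pVal = q + 1)
    (h1 : X.IsSkeletal (q + 1)) (h2 : ¬ X.IsSkeletal q) :
    ∀ b, X.FullAt q b := by
  obtain ⟨z, hz⟩ := exists_nonDeg X h1 h2
  intro b
  have hr := hconn.2 (X.vert 0 z) b
  induction hr with
  | refl => exact ⟨z, hz, rfl⟩
  | tail _ hbc ih => exact fullAt_of_edgeRel hX hfin hp hbc ih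

/-- Star filling: any family of edges with domain `a` is the star of a simplex. -/
lemma starFill_of_fullAt {X : SymSet} (hX : X.Spiny) (hfin : Finite (X.obj 1)) {q : ℕ}
    (hp : X.pVal = q + 1) {a : X.obj 0} (ha : X.FullAt q a)
    (n : ℕ) (g : Fin (n + 1) → X.obj 1) (hg : ∀ j, X.edgeDom (g j) = a) :
    ∃ x : X.obj n, ∀ j, j ≠ 0 → X.edge 0 j x = g j := by
  classical
  obtain ⟨z, hz, hza⟩ := ha
  have cov := fullAt_covers hX hfin hp hz hza
  set α : Fin (n + 1) → Fin (q + 2) := fun j =>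
    if j = 0 then 0
    else if h : X.IsIdentityEdge (g j) then 0 else (cov (g j) (hg j) h).choose with hα
  refine ⟨X.act α z, fun j hj => ?_⟩
  rw [edge_act]
  have hα0 : α 0 = 0 := by simp [hα]
  rw [hα0]
  by_cases h : X.IsIdentityEdge (g j)
  · have hj0 : α j = 0 := by simp [hα, hj, h]
    rw [hj0, edge_self, hza, h.eq_identityEdge, hg j]
  · have hj0 : α j = (cov (g j) (hg j) h).choose := by simp [hα, hj, h]
    rw [hj0]
    exact (cov (g j) (hg j) h).choose_spec.2

end SymSet
namespace SymSet

/-- Any family of edges with domain `a` arises as the star of a simplex at vertex `0`. -/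
def StarFill (X : SymSet) (a : X.obj 0) : Prop :=
  ∀ (n : ℕ) (g : Fin (n + 1) → X.obj 1), (∀ j, X.edgeDom (g j) = a) →
    ∃ x : X.obj n, ∀ j, j ≠ 0 → X.edge 0 j x = g j

lemma StarFill.center {X : SymSet} {a : X.obj 0} (h : X.StarFill a) (n : ℕ) (c : Fin (n + 1))
    (g : Fin (n + 1) → X.obj 1) (hg : ∀ j, X.edgeDom (g j) = a) :
    ∃ x : X.obj n, ∀ j, j ≠ c → X.edge c j x = g j := by
  classical
  set π := Equiv.swap (0 : Fin (n + 1)) c with hπ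
  obtain ⟨x₀, hx₀⟩ := h n (g ∘ ⇑π) (fun j => hg _)
  refine ⟨X.act ⇑π x₀, fun j hj => ?_⟩
  rw [edge_act]
  have hc : π c = 0 := Equiv.swap_apply_right 0 c
  rw [hc]
  have hj0 : π j ≠ 0 := by
    intro h0
    apply hj
    have h1 := congrArg π h0
    simp only [Equiv.swap_apply_self, hπ] at h1
    rw [h1, Equiv.swap_apply_left]
  have h2 := hx₀ (π j) hj0
  simp only [Function.comp_apply, hπ, Equiv.swap_apply_self] at h2
  exact h2

lemma vert_obj0 {X : SymSet} (i : Fin 1) (a : X.obj 0) : X.vert i a = a := by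
  unfold vert
  have : (fun _ : Fin 1 => i) = id := by
    funext t
    show i = t
    rw [Fin.eq_zero i, Fin.eq_zero t]
  rw [this, X.act_id]

lemma all_identity_of_skeletal_zero {X : SymSet} (h : X.IsSkeletal 0) (f : X.obj 1) :
    X.IsIdentityEdge f := by
  obtain ⟨α, y, rfl⟩ := h (X.genSub 0) (fun y => ⟨id, y, (X.act_id y).symm⟩) 1 f
  refine ⟨y, ?_⟩
  have : α = fun _ : Fin 2 => (0 : Fin 1) := by
    funext t
    exact Fin.eq_zero _
  rw [this]
  rfl

lemma starFill_all_of_pzero {X : SymSet} (h0 : X.IsSkeletal 0) (a : X.obj 0) :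
    X.StarFill a := by
  intro n g hg
  refine ⟨X.act (fun _ : Fin (n + 1) => (0 : Fin 1)) a, fun j hj => ?_⟩
  rw [edge_act, edge_self, vert_obj0]
  have hid := all_identity_of_skeletal_zero h0 (g j)
  rw [hid.eq_identityEdge, hg j]

lemma starFill_all {X : SymSet} (hX : X.Spiny) (hconn : X.Connected)
    (hfin : Finite (X.obj 1)) (hdim : X.HasDim X.pVal) (a : X.obj 0) : X.StarFill a := by
  cases hq : X.pVal with
  | zero =>
    have h0 : X.IsSkeletal 0 := hq ▸ hdim.1
    exact starFill_all_of_pzero h0 a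
  | succ q =>
    have h1 : X.IsSkeletal (q + 1) := hq ▸ hdim.1
    have h2 : ¬ X.IsSkeletal q := hdim.2 q (by rw [hq]; omega)
    have hfa := fullAt_all hX hconn hfin hq h1 h2 a
    intro n g hg
    exact starFill_of_fullAt hX hfin hq hfa n g hg

end SymSet
namespace SymSet

lemma exists_adj_of_connected {V : Type*} {G : SimpleGraph V} (hG : G.Connected)
    {v w : V} (hvw : v ≠ w) : ∃ x, G.Adj v x := by
  obtain ⟨p⟩ := hG.preconnected v w
  cases p with
  | nil => exact absurd rfl hvw
  | cons h _ => exact ⟨_, h⟩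

/-- Every finite tree with at least two vertices has a leaf. -/
lemma exists_leaf {n : ℕ} {T : SimpleGraph (Fin (n + 2))} (hT : T.IsTree) :
    ∃ (l u : Fin (n + 2)), T.Adj l u ∧ ∀ x, T.Adj l x → x = u := by
  classical
  haveI : DecidableRel T.Adj := Classical.decRel _
  have hcard := hT.card_edgeFinset
  rw [Fintype.card_fin] at hcard
  have hdeg : ∃ l : Fin (n + 2), T.degree l ≤ 1 := by
    by_contra hall
    push_neg at hall
    have h2 : ∀ l : Fin (n + 2), 2 ≤ T.degree l := fun l => hall l
    have hsum := SimpleGraph.sum_degrees_eq_twice_card_edges T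
    have hge : (n + 2) * 2 ≤ ∑ v : Fin (n + 2), T.degree v := by
      calc (n + 2) * 2 = ∑ _v : Fin (n + 2), 2 := by
            rw [Finset.sum_const, Finset.card_univ, Fintype.card_fin, smul_eq_mul,
              Nat.mul_comm]
        _ ≤ ∑ v : Fin (n + 2), T.degree v := Finset.sum_le_sum (fun i _ => h2 i)
    rw [hsum] at hge
    omega
  obtain ⟨l, hl⟩ := hdeg
  have hpos : 0 < T.degree l := by
    rw [SimpleGraph.degree_pos_iff_exists_adj]
    obtain ⟨w, hw⟩ := exists_ne l
    exact exists_adj_of_connected hT.isConnected (Ne.symm hw)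
  have hdeg1 : T.degree l = 1 := le_antisymm hl hpos
  obtain ⟨u, hu⟩ := Finset.card_eq_one.mp hdeg1
  refine ⟨l, u, ?_, ?_⟩
  · have : u ∈ T.neighborFinset l := by rw [hu]; exact Finset.mem_singleton_self u
    exact (SimpleGraph.mem_neighborFinset T l u).mp this
  · intro x hx
    have : x ∈ T.neighborFinset l := (SimpleGraph.mem_neighborFinset T l x).mpr hx
    rw [hu] at this
    exact Finset.mem_singleton.mp this

lemma walk_avoid {n : ℕ} {T : SimpleGraph (Fin (n + 2))} {l u : Fin (n + 2)}
    (hu : ∀ x, T.Adj l x → x = u) :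
    ∀ (k : ℕ) (s t : Fin (n + 2)) (w : T.Walk s t), w.length ≤ k →
      ∀ (x y : Fin (n + 1)), s = l.succAbove x → t = l.succAbove y →
      (T.comap l.succAbove).Reachable x y := by
  intro k
  induction k with
  | zero =>
    intro s t w hw x y hs ht
    have hst : s = t := w.eq_of_length_eq_zero (Nat.le_zero.mp hw)
    have : x = y := Fin.succAbove_right_injective (by rw [← hs, ← ht, hst])
    exact this ▸ SimpleGraph.Reachable.refl x
  | succ k ih =>
    intro s t w hw x y hs ht
    cases w with
    | nil =>
      have : x = y := Fin.succAbove_right_injective (by rw [← hs, ← ht])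
      exact this ▸ SimpleGraph.Reachable.refl x
    | @cons _ z _ h w' =>
      by_cases hz : z = l
      · cases w' with
        | nil => exact absurd (hz ▸ ht).symm (Fin.succAbove_ne l y)
        | @cons _ b _ h2 w'' =>
          rw [hz] at h h2
          have hb : b = u := hu b h2
          have hsu : s = u := hu s (T.adj_symm h)
          have hbs : b = l.succAbove x := by rw [hb, ← hsu, hs]
          have hlen : w''.length ≤ k := by
            simp only [SimpleGraph.Walk.length_cons] at hw
            omega
          exact ih b t w'' hlen x y hbs ht
      · obtain ⟨z', hz'⟩ := Fin.exists_succAbove_eq hz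
        have hadj : (T.comap l.succAbove).Adj x z' := by
          show T.Adj (l.succAbove x) (l.succAbove z')
          rw [hz', ← hs]
          exact h
        have hlen : w'.length ≤ k := by
          simp only [SimpleGraph.Walk.length_cons] at hw
          omega
        exact (hadj.reachable).trans (ih z t w' hlen z' y hz'.symm ht)

lemma comap_leaf_isTree {n : ℕ} {T : SimpleGraph (Fin (n + 2))} (hT : T.IsTree)
    {l u : Fin (n + 2)} (hu : ∀ x, T.Adj l x → x = u) :
    (T.comap (Fin.succAbove l)).IsTree := by
  constructor
  · rw [SimpleGraph.connected_iff]
    refine ⟨fun x y => ?_, ⟨0⟩⟩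
    obtain ⟨w⟩ := hT.isConnected.preconnected (l.succAbove x) (l.succAbove y)
    exact walk_avoid hu w.length _ _ w le_rfl x y rfl rfl
  · intro v c hc
    have hinj : Function.Injective (Fin.succAbove l) := Fin.succAbove_right_injective
    exact hT.2
      (c.map (⟨Fin.succAbove l, fun {a b} h => h⟩ : T.comap (Fin.succAbove l) →g T))
      (hc.map (by exact hinj))

end SymSet
namespace SymSet

lemma edge_zero_one {X : SymSet} (f : X.obj 1) : X.edge 0 1 f = f := by
  unfold edge
  have : (fun t : Fin 2 => if t = 0 then (0 : Fin 2) else 1) = id := by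
    funext t; fin_cases t <;> simp
  rw [this, X.act_id]

lemma spine_surj {X : SymSet} (hX : X.Spiny) (hSF : ∀ a, X.StarFill a) :
    ∀ (m : ℕ) (T : SimpleGraph (Fin (m + 2))), T.IsTree →
      ∀ (e : ∀ i j : Fin (m + 2), i < j → T.Adj i j → X.obj 1)
        (v : Fin (m + 2) → X.obj 0),
        (∀ (i j : Fin (m + 2)) (hlt : i < j) (h : T.Adj i j),
          X.edgeDom (e i j hlt h) = v i ∧ X.edgeCod (e i j hlt h) = v j) →
        ∃ x : X.obj (m + 1), ∀ (i j : Fin (m + 2)) (hlt : i < j) (h : T.Adj i j),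
          X.edge i j x = e i j hlt h := by
  intro m
  induction m with
  | zero =>
    intro T hT e v hv
    have h01 : T.Adj 0 1 := by
      obtain ⟨b, hb⟩ := exists_adj_of_connected hT.isConnected
        (show (0 : Fin 2) ≠ 1 by decide)
      have hb1 : b = 1 := by
        have h1 := b.isLt
        have h2 : b.val ≠ 0 := fun hc => hb.ne' (Fin.ext hc)
        apply Fin.ext
        show b.val = 1
        omega
      exact hb1 ▸ hb
    have hlt01 : (0 : Fin 2) < 1 := by decide
    refine ⟨e 0 1 hlt01 h01, ?_⟩
    intro i j hlt h
    have hij : i = 0 ∧ j = 1 := by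
      have h1 := j.isLt
      have h2 : i.val < j.val := hlt
      constructor <;> apply Fin.ext
      · show i.val = 0
        omega
      · show j.val = 1
        omega
    obtain ⟨hi, hj⟩ := hij
    subst hi; subst hj
    rw [edge_zero_one]
  | succ m ih =>
    intro T hT e v hv
    classical
    obtain ⟨l, u, hadj, hu⟩ := exists_leaf hT
    have hul : u ≠ l := hadj.ne'
    have hembinj : Function.Injective (Fin.succAbove l) := Fin.succAbove_right_injective
    have hembmono : StrictMono (Fin.succAbove l) := Fin.strictMono_succAbove l
    have hT' : (T.comap (Fin.succAbove l)).IsTree := comap_leaf_isTree hT hu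
    obtain ⟨u', hu'⟩ : ∃ u', l.succAbove u' = u := Fin.exists_succAbove_eq hul
    set e' : ∀ i j : Fin (m + 2), i < j → (T.comap (Fin.succAbove l)).Adj i j → X.obj 1 :=
      fun i j hlt h => e (l.succAbove i) (l.succAbove j) (hembmono hlt) h with he'def
    have hv' : ∀ (i j : Fin (m + 2)) (hlt : i < j) (h : (T.comap (Fin.succAbove l)).Adj i j),
        X.edgeDom (e' i j hlt h) = (v ∘ l.succAbove) i ∧
        X.edgeCod (e' i j hlt h) = (v ∘ l.succAbove) j :=
      fun i j hlt h => hv (l.succAbove i) (l.succAbove j) (hembmono hlt) h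
    obtain ⟨x', hx'⟩ := ih (T.comap (Fin.succAbove l)) hT' e' (v ∘ l.succAbove) hv'
    have hvert : X.vert u' x' = v u := by
      obtain ⟨w, hw⟩ := exists_ne u'
      obtain ⟨t, ht⟩ := exists_adj_of_connected hT'.isConnected (Ne.symm hw)
      rcases Ne.lt_or_gt (ht.ne : u' ≠ t) with hlt | hlt
      · have h1 := hx' u' t hlt ht
        have h2 := (hv' u' t hlt ht).1
        rw [← h1, edgeDom_edge] at h2
        rw [h2]
        show v (l.succAbove u') = v u
        rw [hu']
      · have h1 := hx' t u' hlt ht.symm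
        have h2 := (hv' t u' hlt ht.symm).2
        rw [← h1, edgeCod_edge] at h2
        rw [h2]
        show v (l.succAbove u') = v u
        rw [hu']
    set eul : X.obj 1 :=
      if hlt : u < l then e u l hlt hadj.symm
      else X.rev (e l u ((Ne.lt_or_gt (hadj.ne : l ≠ u)).resolve_right hlt) hadj) with heul
    have heul_dom : X.edgeDom eul = v u := by
      rw [heul]
      split
      · exact (hv u l _ hadj.symm).1
      · rw [edgeDom_rev]
        exact (hv l u _ hadj).2
    set pre : ∀ j : Fin (m + 3), j ≠ l → Fin (m + 2) :=
      fun j hj => (Fin.exists_succAbove_eq hj).choose with hpre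
    have hpre_spec : ∀ (j : Fin (m + 3)) (hj : j ≠ l), l.succAbove (pre j hj) = j :=
      fun j hj => (Fin.exists_succAbove_eq hj).choose_spec
    set g : Fin (m + 3) → X.obj 1 :=
      fun j => if hj : j = l then eul else X.edge u' (pre j hj) x' with hg
    have hgdom : ∀ j, X.edgeDom (g j) = v u := by
      intro j
      rw [hg]
      dsimp only
      split
      · exact heul_dom
      · rw [edgeDom_edge, hvert]
    obtain ⟨y, hy⟩ := (hSF (v u)).center (m + 2) u g hgdom
    have hrest : X.act (Fin.succAbove l) y = x' := by
      apply star_determines hX (by omega) u'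
      intro k hk
      rw [edge_act, hu']
      have hk' : l.succAbove k ≠ u := fun hcon => hk (hembinj (hcon.trans hu'.symm))
      rw [hy (l.succAbove k) hk']
      have hkl : l.succAbove k ≠ l := Fin.succAbove_ne l k
      simp only [hg]
      rw [dif_neg hkl]
      congr 1
      exact hembinj (hpre_spec (l.succAbove k) hkl)
    refine ⟨y, ?_⟩
    intro i j hlt h
    by_cases hjl : j = l
    · obtain rfl : l = j := hjl.symm
      obtain rfl : u = i := (hu i h.symm).symm
      rw [hy l hadj.ne]
      simp only [hg]
      rw [dif_pos trivial, heul, dif_pos hlt]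
    · by_cases hil : i = l
      · obtain rfl : l = i := hil.symm
        obtain rfl : u = j := (hu j h).symm
        calc X.edge l u y = X.rev (X.edge u l y) := (rev_edge u l y).symm
          _ = e l u hlt h := by
              rw [hy l hadj.ne]
              simp only [hg]
              rw [dif_pos trivial, heul, dif_neg (asymm hlt), rev_rev]
      · obtain ⟨i₀, rfl⟩ := Fin.exists_succAbove_eq hil
        obtain ⟨j₀, rfl⟩ := Fin.exists_succAbove_eq hjl
        have hlt0 : i₀ < j₀ := hembmono.lt_iff_lt.mp hlt
        have hadj0 : (T.comap (Fin.succAbove l)).Adj i₀ j₀ := h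
        have h1 : X.edge (l.succAbove i₀) (l.succAbove j₀) y
            = X.edge i₀ j₀ (X.act (Fin.succAbove l) y) := (edge_act _ _ _ _).symm
        rw [h1, hrest, hx' i₀ j₀ hlt0 hadj0]

end SymSet
/-- a connected finite partial groupoid of dimension `p(X)` is a
groupoid. -/
theorem stmt13 (X : SymSet) (hX : X.Spiny) (hconn : X.Connected)
    (hfin : Finite (X.obj 1)) (hdim : X.HasDim X.pVal) : X.IsGroupoid := by
  have hSF : ∀ a, X.StarFill a := SymSet.starFill_all hX hconn hfin hdim
  intro n hn T hT
  refine ⟨hX n hn T hT, ?_⟩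
  obtain ⟨m, rfl⟩ : ∃ m, n = m + 1 := ⟨n - 1, by omega⟩
  rintro ⟨e, v, hv⟩
  obtain ⟨x, hx⟩ := SymSet.spine_surj hX hSF m T hT e v hv
  refine ⟨x, Subtype.ext ?_⟩
  funext i j hlt h
  exact hx i j hlt h
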